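/- Let V be a finite-dimensional real inner product space, φ an alternating p-form on V, and ξ = (e₁,…,e_p) an orthonormal p-tuple. If there exists a constant c ∈ ℝ such that λ_φ(A)(e₁,…,e_p) = c·tr_ξ A for every linear endomorphism A of V, then c = φ(e₁,…,e_p) and ξ is φ-critical. (Remark A.5) -/

import Mathlib

open scoped RealInnerProductSpace

noncomputable section

variable {V : Type*} [NormedAddCommGroup V] [InnerProductSpace ℝ V] [FiniteDimensional ℝ V]

/-- `λ_φ(A)`, the action of the endomorphism `A` on the alternating `p`-form `φ` as a
derivation: `λ_φ(A)(v₁,…,v_p) = Σ_k φ(v₁,…,A v_k,…,v_p)`. -/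
def lambdaForm {p : ℕ} (φ : V [⋀^Fin p]→ₗ[ℝ] ℝ) (A : V →ₗ[ℝ] V) (v : Fin p → V) : ℝ :=
  ∑ k, φ (Function.update v k (A (v k)))

/-- An orthonormal `p`-tuple `ξ = (e₁,…,e_p)` is `φ`-critical if `φ` vanishes on all the
first cousins of `ξ`, i.e. `φ(e₁,…,e_{k−1}, b, e_{k+1},…,e_p) = 0` for every index `k`
and every `b` orthogonal to `span{e₁,…,e_p}`. -/
def IsPhiCritical {p : ℕ} (φ : V [⋀^Fin p]→ₗ[ℝ] ℝ) (e : Fin p → V) : Prop :=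
  ∀ (k : Fin p) (b : V), b ∈ (Submodule.span ℝ (Set.range e))ᗮ →
    φ (Function.update e k b) = 0

/-- Remark A.5 (converse part): if `λ_φ(A)(ξ) = c·tr_ξ A` for every endomorphism `A` of
`V`, then `c = φ(ξ)` and `ξ` is `φ`-critical. -/
theorem critical_of_lambdaForm_eq_smul_trace {p : ℕ} (hp : 1 ≤ p)
    (φ : V [⋀^Fin p]→ₗ[ℝ] ℝ)
    (e : Fin p → V) (he : Orthonormal ℝ e) (c : ℝ)
    (hc : ∀ A : V →ₗ[ℝ] V, lambdaForm φ A e = c * ∑ j, ⟪e j, A (e j)⟫) :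
    c = φ e ∧ IsPhiCritical φ e := by
  have hite : ∀ i j, ⟪e i, e j⟫ = if i = j then 1 else 0 := orthonormal_iff_ite.mp he
  have hceq : c = φ e := by
    have hid := hc LinearMap.id
    simp only [lambdaForm, LinearMap.id_coe, id_eq, Function.update_eq_self] at hid
    rw [Finset.sum_const, Finset.card_univ, Fintype.card_fin] at hid
    have hsum : (∑ j : Fin p, ⟪e j, e j⟫) = (p : ℝ) := by
      simp [hite, he.1]
    rw [hsum] at hid
    have hp0 : (p : ℝ) ≠ 0 := Nat.cast_ne_zero.mpr (by omega)
    field_simp at hid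
    rw [mul_comm] at hid
    rw [nsmul_eq_mul] at hid
    exact mul_left_cancel₀ hp0 hid.symm
  refine ⟨hceq, ?_⟩
  intro k b hb
  have hbe : ∀ j, ⟪e j, b⟫ = 0 := fun j =>
    hb (e j) (Submodule.subset_span ⟨j, rfl⟩)
  set A : V →ₗ[ℝ] V := ((innerSL ℝ (e k)).toLinearMap).smulRight b with hA
  have hAe : ∀ j, A (e j) = (if k = j then (1:ℝ) else 0) • b := by
    intro j
    simp [hA, LinearMap.smulRight_apply, hite k j]
  have hcA := hc A
  have hRHS : (∑ j : Fin p, ⟪e j, A (e j)⟫) = 0 := by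
    refine Finset.sum_eq_zero fun j _ => ?_
    rw [hAe j, real_inner_smul_right, hbe j, mul_zero]
  have hLHS : lambdaForm φ A e = φ (Function.update e k b) := by
    unfold lambdaForm
    rw [Finset.sum_eq_single k]
    · rw [hAe k]
      simp
    · intro j _ hjk
      rw [hAe j, if_neg (Ne.symm hjk)]
      simp
    · intro h
      exact absurd (Finset.mem_univ k) h
  rw [hLHS, hRHS, mul_zero] at hcA
  exact hcA
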